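/- Let X be a nonempty set equipped with two metrics d₁ and d₂ such that both (X, d₁) and (X, d₂) are compact metric spaces with the segment property, and let ε ≥ 0 be such that |d₁(x, y) − d₂(x, y)| ≤ ε for all x, y ∈ X. Then for every x ∈ X and every r > 0, the Gromov–Hausdorff distance between the closed ball {z : d₁(x, z) ≤ r} with the metric d₁ and the closed ball {z : d₂(x, z) ≤ r} with the metric d₂ is at most 3ε. -/

import Mathlib

/-- A metric space has the *segment property* if for all `y z` and `s ∈ [0, dist y z]` there is
a point `p` with `dist y p = s` and `dist p z = dist y z - s`. -/
def SegmentProperty (X : Type*) [MetricSpace X] : Prop :=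
  ∀ y z : X, ∀ s : ℝ, 0 ≤ s → s ≤ dist y z →
    ∃ p : X, dist y p = s ∧ dist p z = dist y z - s

/-- Projection into a ball using the segment property. -/
lemma seg_proj {X Y : Type} [MetricSpace X] [MetricSpace Y]
    (hsegY : SegmentProperty Y) (e : X → Y) (ε : ℝ) (hε : 0 ≤ ε)
    (hclose : ∀ a b : X, dist (e a) (e b) ≤ dist a b + ε)
    (x z : X) (r : ℝ) (hz : dist x z ≤ r) (hr : 0 ≤ r) :
    ∃ p : Y, dist (e x) p ≤ r ∧ dist (e z) p ≤ ε := by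
  rcases le_or_gt (dist (e x) (e z)) r with h | h
  · exact ⟨e z, h, by simp [hε]⟩
  · obtain ⟨p, hp1, hp2⟩ := hsegY (e x) (e z) r hr h.le
    refine ⟨p, le_of_eq hp1, ?_⟩
    have h1 := hclose x z
    have c : dist (e z) p = dist p (e z) := dist_comm _ _
    rw [c, hp2]
    linarith

lemma aux_same {X Y : Type} [MetricSpace X] [MetricSpace Y] (e : X → Y) (ε : ℝ)
    (hcl : ∀ a b : X, |dist a b - dist (e a) (e b)| ≤ ε)
    (u u' : X) (v v' : Y) (h1 : dist (e u) v ≤ ε) (h2 : dist (e u') v' ≤ ε) :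
    |dist u u' - dist v v'| ≤ 3 * ε := by
  have hc := abs_le.1 (hcl u u')
  have t1 := dist_triangle4 v (e u) (e u') v'
  have t2 := dist_triangle4 (e u) v v' (e u')
  have c1 : dist v (e u) = dist (e u) v := dist_comm _ _
  have c2 : dist v' (e u') = dist (e u') v' := dist_comm _ _
  rw [abs_le]
  constructor <;> linarith

lemma aux_mixed {X Y : Type} [MetricSpace X] [MetricSpace Y] (e : X ≃ Y) (ε : ℝ)
    (hcl : ∀ a b : X, |dist a b - dist (e a) (e b)| ≤ ε)
    (u u' : X) (v v' : Y) (h1 : dist (e u) v ≤ ε) (h2 : dist (e.symm v') u' ≤ ε) :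
    |dist u u' - dist v v'| ≤ 3 * ε := by
  have hc : |dist u (e.symm v') - dist (e u) v'| ≤ ε := by
    have := hcl u (e.symm v')
    rwa [Equiv.apply_symm_apply] at this
  have hc' := abs_le.1 hc
  have t1 := dist_triangle v (e u) v'
  have t2 := dist_triangle u u' (e.symm v')
  have t3 := dist_triangle u (e.symm v') u'
  have t4 := dist_triangle (e u) v v'
  have c1 : dist v (e u) = dist (e u) v := dist_comm _ _
  have c2 : dist u' (e.symm v') = dist (e.symm v') u' := dist_comm _ _
  rw [abs_le]
  constructor <;> linarith

/-- Let a nonempty set carry two metrics `d₁`, `d₂` (encoded as two compact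
metric spaces `X`, `Y` with the segment property, identified by a bijection `e : X ≃ Y`) with
`|d₁(x, y) − d₂(x, y)| ≤ ε` for all `x, y`. Then for every `x` and every `r > 0`, the
Gromov–Hausdorff distance between the closed `d₁`-ball of radius `r` about `x` and the closed
`d₂`-ball of radius `r` about `e x` is at most `3 ε`. -/
theorem stmt_15 (X : Type) (Y : Type) [MetricSpace X] [MetricSpace Y]
    [CompactSpace X] [CompactSpace Y] [Nonempty X]
    (hsegX : SegmentProperty X) (hsegY : SegmentProperty Y)
    (e : X ≃ Y) (ε : ℝ) (hε : 0 ≤ ε)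
    (hclose : ∀ x y : X, |dist x y - dist (e x) (e y)| ≤ ε) :
    ∀ (x : X) (r : ℝ) (hr : 0 < r),
      haveI hcX : CompactSpace (Metric.closedBall x r) :=
        isCompact_iff_compactSpace.mp Metric.isClosed_closedBall.isCompact
      haveI hcY : CompactSpace (Metric.closedBall (e x) r) :=
        isCompact_iff_compactSpace.mp Metric.isClosed_closedBall.isCompact
      haveI hnX : Nonempty (Metric.closedBall x r) :=
        ⟨⟨x, Metric.mem_closedBall_self hr.le⟩⟩
      haveI hnY : Nonempty (Metric.closedBall (e x) r) :=
        ⟨⟨e x, Metric.mem_closedBall_self hr.le⟩⟩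
      GromovHausdorff.ghDist (Metric.closedBall x r) (Metric.closedBall (e x) r) ≤
        3 * ε := by
  intro x r hr
  haveI hcX : CompactSpace (Metric.closedBall x r) :=
    isCompact_iff_compactSpace.mp Metric.isClosed_closedBall.isCompact
  haveI hcY : CompactSpace (Metric.closedBall (e x) r) :=
    isCompact_iff_compactSpace.mp Metric.isClosed_closedBall.isCompact
  haveI hnX : Nonempty (Metric.closedBall x r) :=
    ⟨⟨x, Metric.mem_closedBall_self hr.le⟩⟩
  haveI hnY : Nonempty (Metric.closedBall (e x) r) :=
    ⟨⟨e x, Metric.mem_closedBall_self hr.le⟩⟩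
  set A := Metric.closedBall x r with hA
  set B := Metric.closedBall (e x) r with hB
  have hclose' : ∀ a b : Y, |dist a b - dist (e.symm a) (e.symm b)| ≤ ε := by
    intro a b
    have := hclose (e.symm a) (e.symm b)
    rw [Equiv.apply_symm_apply, Equiv.apply_symm_apply] at this
    rw [abs_sub_comm]
    exact this
  have hclose1 : ∀ a b : X, dist (e a) (e b) ≤ dist a b + ε := fun a b => by
    have := abs_le.1 (hclose a b); linarith
  have hclose2 : ∀ a b : Y, dist (e.symm a) (e.symm b) ≤ dist a b + ε := fun a b => by
    have := abs_le.1 (hclose' a b); linarith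
  -- projections
  have keyf : ∀ a : A, ∃ b : B, dist (e ↑a) ↑b ≤ ε := by
    intro a
    have ha : dist x (↑a : X) ≤ r := by
      have h := Metric.mem_closedBall.mp a.2; rwa [dist_comm] at h
    obtain ⟨p, hp1, hp2⟩ := seg_proj hsegY e ε hε hclose1 x ↑a r ha hr.le
    exact ⟨⟨p, by rw [Metric.mem_closedBall, dist_comm]; exact hp1⟩, hp2⟩
  have keyg : ∀ b : B, ∃ a : A, dist (e.symm ↑b) ↑a ≤ ε := by
    intro b
    have hb : dist (e x) (↑b : Y) ≤ r := by
      have h := Metric.mem_closedBall.mp b.2; rwa [dist_comm] at h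
    obtain ⟨p, hp1, hp2⟩ := seg_proj hsegX e.symm ε hε hclose2 (e x) ↑b r hb hr.le
    rw [Equiv.symm_apply_apply] at hp1
    exact ⟨⟨p, by rw [Metric.mem_closedBall, dist_comm]; exact hp1⟩, hp2⟩
  choose f hf using keyf
  choose g hg using keyg
  set Φ : A ⊕ B → A := Sum.elim (fun a => a) g with hΦ
  set Ψ : A ⊕ B → B := Sum.elim f (fun b => b) with hΨ
  have H3 : ∀ p q : A ⊕ B, |dist (Φ p) (Φ q) - dist (Ψ p) (Ψ q)| ≤ 3 * ε := by
    rintro (a | b) (a' | b') <;>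
      simp only [hΦ, hΨ, Sum.elim_inl, Sum.elim_inr, Subtype.dist_eq]
    · exact aux_same e ε hclose ↑a ↑a' ↑(f a) ↑(f a') (hf a) (hf a')
    · exact aux_mixed e ε hclose ↑a ↑(g b') ↑(f a) ↑b' (hf a) (hg b')
    · rw [dist_comm (↑(g b) : X) (↑a' : X), dist_comm (↑b : Y) (↑(f a') : Y)]
      exact aux_mixed e ε hclose ↑a' ↑(g b) ↑(f a') ↑b (hf a') (hg b)
    · rw [abs_sub_comm]
      exact aux_same e.symm ε hclose' ↑b ↑b' ↑(g b) ↑(g b') (hg b) (hg b')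
  have main : ∀ δ > (0 : ℝ), GromovHausdorff.ghDist A B ≤ 3 * ε / 2 + δ := by
    intro δ hδ
    have hσ : (0 : ℝ) < 3 * ε / 2 + δ := by linarith
    have H : ∀ p q : A ⊕ B,
        |dist (Φ p) (Φ q) - dist (Ψ p) (Ψ q)| ≤ 2 * (3 * ε / 2 + δ) := fun p q =>
      (H3 p q).trans (by linarith)
    letI : MetricSpace (A ⊕ B) := Metric.glueMetricApprox Φ Ψ (3 * ε / 2 + δ) hσ H
    have Il : Isometry (Sum.inl : A → A ⊕ B) := Isometry.of_dist_eq fun _ _ => rfl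
    have Ir : Isometry (Sum.inr : B → A ⊕ B) := Isometry.of_dist_eq fun _ _ => rfl
    refine (GromovHausdorff.ghDist_le_hausdorffDist Il Ir).trans ?_
    apply Metric.hausdorffDist_le_of_mem_dist hσ.le
    · rintro _ ⟨a, rfl⟩
      refine ⟨Sum.inr (f a), Set.mem_range_self _, ?_⟩
      exact le_of_eq (Metric.glueDist_glued_points Φ Ψ (3 * ε / 2 + δ) (Sum.inl a))
    · rintro _ ⟨b, rfl⟩
      refine ⟨Sum.inl (g b), Set.mem_range_self _, ?_⟩
      rw [dist_comm]
      exact le_of_eq (Metric.glueDist_glued_points Φ Ψ (3 * ε / 2 + δ) (Sum.inr b))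
  have h2 : GromovHausdorff.ghDist A B ≤ 3 * ε / 2 :=
    le_of_forall_pos_le_add main
  linarith
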